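/- Let (Ω, P) be a probability space, B : Ω → Finset (Fin N) a random mini-batch with measurable inclusion events, g : Fin N → EuclideanSpace ℝ (Fin p), and k > 0, with λ i := P(i ∈ B) and ρ i j := P(i ∈ B ∧ j ∈ B), and Ĝ := (1/k) Σ_{i ∈ B} g i. If the sampling is repulsive, i.e. ρ i j ≤ λ i · λ j for all i ≠ j, and the gradients are aligned, i.e. g i · g j ≥ 0 for all i, j, then the variance of Ĝ is at most the variance of independent (non-repulsive) sampling with the same marginal inclusion probabilities: E[‖Ĝ‖²] − ‖E[Ĝ]‖² ≤ (1/k²) Σ_{i : Fin N} λ i · (1 − λ i) · ‖g i‖². (Discrete version of the variance-reduction claim of Remark 3.) -/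

import Mathlib

open MeasureTheory
open scoped InnerProductSpace

/-- Discrete version of Remark 3: a repulsive mini-batch sampling scheme with aligned
gradients has variance at most that of independent sampling with the same marginal
inclusion probabilities. -/
theorem discrete_repulsive_variance_reduction
    {Ω : Type*} [MeasurableSpace Ω] (P : Measure Ω) [IsProbabilityMeasure P]
    {N p : ℕ} (B : Ω → Finset (Fin N))
    (hB : ∀ i : Fin N, MeasurableSet {ω | i ∈ B ω})
    (hB2 : ∀ i j : Fin N, MeasurableSet {ω | i ∈ B ω ∧ j ∈ B ω})
    (g : Fin N → EuclideanSpace ℝ (Fin p)) (k : ℝ) (hk : 0 < k)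
    (hrep : ∀ i j : Fin N, i ≠ j →
      (P {ω | i ∈ B ω ∧ j ∈ B ω}).toReal
        ≤ (P {ω | i ∈ B ω}).toReal * (P {ω | j ∈ B ω}).toReal)
    (halign : ∀ i j : Fin N, 0 ≤ ⟪g i, g j⟫_ℝ) :
    (∫ ω, ‖(1 / k) • (∑ i ∈ B ω, g i)‖ ^ 2 ∂P)
      - ‖∫ ω, (1 / k) • (∑ i ∈ B ω, g i) ∂P‖ ^ 2
    ≤ (1 / k ^ 2) * ∑ i : Fin N,
        (P {ω | i ∈ B ω}).toReal * (1 - (P {ω | i ∈ B ω}).toReal) * ‖g i‖ ^ 2 := by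
  classical
  set lam : Fin N → ℝ := fun i => (P {ω | i ∈ B ω}).toReal with hlam
  set rho : Fin N → Fin N → ℝ := fun i j => (P {ω | i ∈ B ω ∧ j ∈ B ω}).toReal with hrho
  set ind : Fin N → Ω → ℝ := fun i ω => if i ∈ B ω then (1:ℝ) else 0 with hind
  -- indicator facts
  have hind_eq : ∀ i, ind i = Set.indicator {ω | i ∈ B ω} (fun _ => (1:ℝ)) := by
    intro i; funext ω; simp [hind, Set.indicator_apply]
  have hind_int : ∀ i, Integrable (ind i) P := by
    intro i
    rw [hind_eq]
    exact (integrable_const (1:ℝ)).indicator (hB i)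
  have hind_integral : ∀ i, ∫ ω, ind i ω ∂P = lam i := by
    intro i
    rw [hind_eq]
    simp [integral_indicator_const (1:ℝ) (hB i), hlam, Measure.real]
  have hprod_eq : ∀ i j, (fun ω => ind i ω * ind j ω)
      = Set.indicator {ω | i ∈ B ω ∧ j ∈ B ω} (fun _ => (1:ℝ)) := by
    intro i j; funext ω
    by_cases h1 : i ∈ B ω <;> by_cases h2 : j ∈ B ω <;>
      simp [hind, Set.indicator_apply, h1, h2]
  have hprod_int : ∀ i j, Integrable (fun ω => ind i ω * ind j ω) P := by
    intro i j
    rw [hprod_eq]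
    exact (integrable_const (1:ℝ)).indicator (hB2 i j)
  have hprod_integral : ∀ i j, ∫ ω, ind i ω * ind j ω ∂P = rho i j := by
    intro i j
    rw [hprod_eq]
    simp [integral_indicator_const (1:ℝ) (hB2 i j), hrho, Measure.real]
  -- rewrite the random sum
  have hsum : ∀ ω, (∑ i ∈ B ω, g i) = ∑ i : Fin N, ind i ω • g i := by
    intro ω
    simp [hind, ite_smul, Finset.sum_ite_mem]
  -- norm-square expansion
  have expand : ∀ c : Fin N → ℝ, ‖∑ i : Fin N, c i • g i‖ ^ 2
      = ∑ i : Fin N, ∑ j : Fin N, c i * c j * ⟪g i, g j⟫_ℝ := by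
    intro c
    rw [← real_inner_self_eq_norm_sq, sum_inner]
    refine Finset.sum_congr rfl fun i _ => ?_
    rw [inner_sum]
    refine Finset.sum_congr rfl fun j _ => ?_
    rw [real_inner_smul_left, real_inner_smul_right]
    ring
  have hnorm : ∀ v : EuclideanSpace ℝ (Fin p), ‖(1 / k) • v‖ ^ 2 = (1 / k ^ 2) * ‖v‖ ^ 2 := by
    intro v
    rw [norm_smul]
    rw [mul_pow, Real.norm_eq_abs, sq_abs]
    ring
  -- first moment
  have hmean : (∫ ω, (1 / k) • (∑ i ∈ B ω, g i) ∂P)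
      = (1 / k) • ∑ i : Fin N, lam i • g i := by
    simp_rw [hsum]
    rw [integral_smul]
    congr 1
    rw [integral_finset_sum _ (fun i _ => (hind_int i).smul_const (g i))]
    exact Finset.sum_congr rfl fun i _ => by rw [integral_smul_const, hind_integral]
  -- second moment
  have hterm_int : ∀ i j, Integrable (fun ω => ind i ω * ind j ω * ⟪g i, g j⟫_ℝ) P :=
    fun i j => (hprod_int i j).mul_const _
  have hsecond : (∫ ω, ‖(1 / k) • (∑ i ∈ B ω, g i)‖ ^ 2 ∂P)
      = (1 / k ^ 2) * ∑ i : Fin N, ∑ j : Fin N, rho i j * ⟪g i, g j⟫_ℝ := by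
    have : ∀ ω, ‖(1 / k) • (∑ i ∈ B ω, g i)‖ ^ 2
        = (1 / k ^ 2) * ∑ i : Fin N, ∑ j : Fin N, ind i ω * ind j ω * ⟪g i, g j⟫_ℝ := by
      intro ω
      rw [hsum ω, hnorm, expand]
    simp_rw [this]
    rw [integral_const_mul]
    congr 1
    rw [integral_finset_sum _ (fun i _ => integrable_finset_sum _ (fun j _ => hterm_int i j))]
    refine Finset.sum_congr rfl fun i _ => ?_
    rw [integral_finset_sum _ (fun j _ => hterm_int i j)]
    refine Finset.sum_congr rfl fun j _ => ?_
    rw [integral_mul_const, hprod_integral]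
  -- norm of mean
  have hmeannorm : ‖∫ ω, (1 / k) • (∑ i ∈ B ω, g i) ∂P‖ ^ 2
      = (1 / k ^ 2) * ∑ i : Fin N, ∑ j : Fin N, lam i * lam j * ⟪g i, g j⟫_ℝ := by
    rw [hmean, hnorm, expand]
  rw [hsecond, hmeannorm]
  rw [← mul_sub]
  have hk2 : (0:ℝ) ≤ 1 / k ^ 2 := by positivity
  refine mul_le_mul_of_nonneg_left ?_ hk2
  rw [← Finset.sum_sub_distrib]
  have key : ∀ i : Fin N,
      ((∑ j : Fin N, rho i j * ⟪g i, g j⟫_ℝ) - ∑ j : Fin N, lam i * lam j * ⟪g i, g j⟫_ℝ)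
      ≤ lam i * (1 - lam i) * ‖g i‖ ^ 2 := by
    intro i
    rw [← Finset.sum_sub_distrib]
    have hdiag : rho i i = lam i := by
      simp [hrho, hlam]
    have hsplit : (∑ j : Fin N, (rho i j * ⟪g i, g j⟫_ℝ - lam i * lam j * ⟪g i, g j⟫_ℝ))
        = (rho i i * ⟪g i, g i⟫_ℝ - lam i * lam i * ⟪g i, g i⟫_ℝ)
          + ∑ j ∈ Finset.univ.erase i, (rho i j * ⟪g i, g j⟫_ℝ - lam i * lam j * ⟪g i, g j⟫_ℝ) := by
      rw [← Finset.add_sum_erase _ _ (Finset.mem_univ i)]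
    rw [hsplit]
    have h1 : rho i i * ⟪g i, g i⟫_ℝ - lam i * lam i * ⟪g i, g i⟫_ℝ
        = lam i * (1 - lam i) * ‖g i‖ ^ 2 := by
      rw [hdiag, real_inner_self_eq_norm_sq]
      ring
    have h2 : (∑ j ∈ Finset.univ.erase i, (rho i j * ⟪g i, g j⟫_ℝ - lam i * lam j * ⟪g i, g j⟫_ℝ))
        ≤ 0 := by
      refine Finset.sum_nonpos fun j hj => ?_
      have hne : i ≠ j := fun h => (Finset.mem_erase.mp hj).1 h.symm
      have := hrep i j hne
      have hinner := halign i j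
      nlinarith [this, hinner]
    linarith
  exact Finset.sum_le_sum fun i _ => key i
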